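/- Let E be a directed graph whose Leavitt path algebra over a field K is graded left primitive. Then the vertex set E⁰ has the Countable Separation Property. -/

import Mathlib

/-- A directed graph with vertex set `V`, edge set `E`, source map `s` and range map `r`. -/
structure DiGraph where
  V : Type
  E : Type
  s : E → V
  r : E → V

namespace DiGraph

variable (G : DiGraph)

/-- There is an edge from `u` to `w`. -/
def Step (u w : G.V) : Prop := ∃ e : G.E, G.s e = u ∧ G.r e = w

/-- `G.Reach u w` means `u ≥ w`: there is a (possibly trivial) directed path from `u` to `w`. -/
def Reach (u w : G.V) : Prop := Relation.ReflTransGen G.Step u w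

/-- The root `R(W)` of a set of vertices `W`. -/
def root (W : Set G.V) : Set G.V := {u | ∃ w ∈ W, G.Reach u w}

/-- A set `H` of vertices is hereditary if `u ∈ H` and `u ≥ w` imply `w ∈ H`. -/
def Hereditary (H : Set G.V) : Prop := ∀ u ∈ H, ∀ w, G.Reach u w → w ∈ H

/-- A vertex is regular if it emits at least one and only finitely many edges. -/
def Regular (v : G.V) : Prop := (G.s ⁻¹' {v}).Nonempty ∧ (G.s ⁻¹' {v}).Finite

/-- A set `H` is saturated if every regular vertex all of whose out-edges
have ranges in `H` lies in `H`. -/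
def Saturated (H : Set G.V) : Prop :=
  ∀ v, G.Regular v → (∀ e, G.s e = v → G.r e ∈ H) → v ∈ H

/-- A set of vertices is downwards directed if every two of its elements have a
common lower bound in it. -/
def DownDirected (W : Set G.V) : Prop :=
  ∀ u ∈ W, ∀ v ∈ W, ∃ w ∈ W, G.Reach u w ∧ G.Reach v w

/-- The Countable Separation Property of a set of vertices. -/
def CSP (W : Set G.V) : Prop := ∃ C : Set G.V, C.Countable ∧ W ⊆ G.root C

/-- The Inner Countable Separation Property of a set of vertices. -/
def ICSP (W : Set G.V) : Prop := ∃ C : Set G.V, C.Countable ∧ C ⊆ W ∧ W ⊆ G.root C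

/-- `G.IsPathFrom v l` : the list of edges `l` forms a directed path starting at `v`. -/
def IsPathFrom : (G : DiGraph) → G.V → List G.E → Prop
  | _, _, [] => True
  | G, v, e :: es => G.s e = v ∧ G.IsPathFrom (G.r e) es

/-- The end (range) vertex of a path `l` starting at `v`. -/
def pathEnd : (G : DiGraph) → G.V → List G.E → G.V
  | _, v, [] => v
  | G, _, e :: es => G.pathEnd (G.r e) es

/-- The set of vertices on a path `l` starting at `v`. -/
def pathVerts (v : G.V) (l : List G.E) : Set G.V := insert v {w | ∃ e ∈ l, G.r e = w}

/-- A cycle based at `v` : a nonempty closed path in which distinct edges have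
distinct sources. -/
def IsCycle (v : G.V) (l : List G.E) : Prop :=
  l ≠ [] ∧ G.IsPathFrom v l ∧ G.pathEnd v l = v ∧ (l.map G.s).Nodup

/-- A cycle is exclusive if no vertex on it is the base of a cycle distinct from it
(cycles being identified with their sets of edges). -/
def ExclusiveCycle (v : G.V) (l : List G.E) : Prop :=
  G.IsCycle v l ∧ ∀ u ∈ G.pathVerts v l, ∀ m, G.IsCycle u m → (∀ e, e ∈ m ↔ e ∈ l)

open Classical in
/-- Auxiliary reduction on reversed edge lists: cancel common initial segments. -/
noncomputable def redAux (G : DiGraph) : List G.E → List G.E → List G.E × List G.E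
  | a :: as, b :: bs => if a = b then redAux G as bs else (a :: as, b :: bs)
  | as, bs => (as, bs)

/-- The reduction function: `red (p, q)` cancels the common final edges of the
paths `p` and `q`, implementing `red(ee*q*) = q*` and `red(pee*q*) = red(pq*)`. -/
noncomputable def red (p q : List G.E) : List G.E × List G.E :=
  ((G.redAux p.reverse q.reverse).1.reverse, (G.redAux p.reverse q.reverse).2.reverse)

/-- The source vertex of an element `pq*` (with `q` a path starting at the base
vertex `v`): the source of `p` if `p` is nonempty, and `r(q)` otherwise. -/
def startVtx (v : G.V) : List G.E × List G.E → G.V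
  | ([], q) => G.pathEnd v q
  | (e :: _, _) => G.s e

/-- Membership in the set `Y` associated to a cycle `c` (based at `cv`, with edges
`cl`) and a vertex `v ∈ c⁰`: pairs `(p, q)` of paths with `r(p) = r(q) ∈ c⁰` and
`s(q) = v`. -/
def MemY (cv : G.V) (cl : List G.E) (v : G.V) (x : List G.E × List G.E) : Prop :=
  G.IsPathFrom (G.startVtx v x) x.1 ∧ G.IsPathFrom v x.2 ∧
    G.pathEnd (G.startVtx v x) x.1 = G.pathEnd v x.2 ∧
    G.pathEnd v x.2 ∈ G.pathVerts cv cl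

/-- The degree `|p| − |q|` of an element `pq*`. -/
def degOf (G : DiGraph) (x : List G.E × List G.E) : ℤ :=
  (x.1.length : ℤ) - (x.2.length : ℤ)

/-- The branching system `X`: reduced elements of `Y`. -/
def Xset (cv : G.V) (cl : List G.E) (v : G.V) : Set (List G.E × List G.E) :=
  {x | G.MemY cv cl v x ∧ G.red x.1 x.2 = x}

/-- The subset `X_w` of `X` of elements with source vertex `w`. -/
def Xvtx (cv : G.V) (cl : List G.E) (v : G.V) (w : G.V) : Set (List G.E × List G.E) :=
  {x ∈ G.Xset cv cl v | G.startVtx v x = w}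

/-- The subset `X_e` of `X` of elements of the form `red(e r s*)` with `e r s* ∈ Y`. -/
def Xedge (cv : G.V) (cl : List G.E) (v : G.V) (e : G.E) : Set (List G.E × List G.E) :=
  {x | ∃ rs : List G.E × List G.E, G.MemY cv cl v (e :: rs.1, rs.2) ∧
    x = G.red (e :: rs.1) rs.2}

/-- The map `σ_e : X_{r(e)} → X_e`, `pq* ↦ red(e p q*)`. -/
noncomputable def sigmaE (e : G.E) (x : List G.E × List G.E) : List G.E × List G.E :=
  G.red (e :: x.1) x.2

end DiGraph

noncomputable section
open Classical

variable (K : Type) [Field K] (G : DiGraph)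

/-- Generators of the Leavitt path algebra: vertices, edges and ghost edges. -/
abbrev LVGen (G : DiGraph) : Type := G.V ⊕ G.E ⊕ G.E

/-- The free algebra on the generators. -/
abbrev LFree : Type := FreeAlgebra K (LVGen G)

/-- Vertex generator. -/
def fv (v : G.V) : LFree K G := FreeAlgebra.ι K (Sum.inl v)
/-- Edge generator. -/
def fe (e : G.E) : LFree K G := FreeAlgebra.ι K (Sum.inr (Sum.inl e))
/-- Ghost edge generator. -/
def fg (e : G.E) : LFree K G := FreeAlgebra.ι K (Sum.inr (Sum.inr e))

/-- The defining relations of the Leavitt path algebra: the path algebra relations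
(V), (E) together with (CK1) and (CK2). -/
inductive LRel : LFree K G → LFree K G → Prop
  | vv : ∀ {v w : G.V}, v ≠ w → LRel (fv K G v * fv K G w) 0
  | v_idem : ∀ v : G.V, LRel (fv K G v * fv K G v) (fv K G v)
  | se : ∀ e : G.E, LRel (fv K G (G.s e) * fe K G e) (fe K G e)
  | er : ∀ e : G.E, LRel (fe K G e * fv K G (G.r e)) (fe K G e)
  | rg : ∀ e : G.E, LRel (fv K G (G.r e) * fg K G e) (fg K G e)
  | gs : ∀ e : G.E, LRel (fg K G e * fv K G (G.s e)) (fg K G e)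
  | ck1 : ∀ {e f : G.E}, e ≠ f → LRel (fg K G e * fe K G f) 0
  | ck1e : ∀ e : G.E, LRel (fg K G e * fe K G e) (fv K G (G.r e))
  | ck2 : ∀ (v : G.V) (h : (G.s ⁻¹' {v}).Finite), (G.s ⁻¹' {v}).Nonempty →
      LRel (fv K G v) (∑ e ∈ h.toFinset, fe K G e * fg K G e)

/-- The Leavitt path algebra `L_K(E)` of `G` over `K`. -/
abbrev LPA : Type := RingQuot (LRel K G)

/-- The image of a vertex in `L_K(E)`. -/
def lv (v : G.V) : LPA K G := RingQuot.mkAlgHom K (LRel K G) (fv K G v)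
/-- The image of an edge in `L_K(E)`. -/
def le (e : G.E) : LPA K G := RingQuot.mkAlgHom K (LRel K G) (fe K G e)
/-- The image of a ghost edge in `L_K(E)`. -/
def lg (e : G.E) : LPA K G := RingQuot.mkAlgHom K (LRel K G) (fg K G e)

/-- The element of `L_K(E)` associated to a path `p` (a list of edges). -/
def pProd (p : List G.E) : LPA K G := (p.map (le K G)).prod
/-- The element `q*` of `L_K(E)` associated to a path `q`. -/
def gProd (q : List G.E) : LPA K G := (q.reverse.map (lg K G)).prod

/-- The set of monomials `pq*` of degree `n` in `L_K(E)`. -/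
def MonSet (n : ℤ) : Set (LPA K G) :=
  {x | ∃ (u w : G.V) (p q : List G.E), G.IsPathFrom u p ∧ G.IsPathFrom w q ∧
    G.pathEnd u p = G.pathEnd w q ∧ (p.length : ℤ) - (q.length : ℤ) = n ∧
    x = lv K G u * pProd K G p * gProd K G q}

/-- The degree-`n` homogeneous component of `L_K(E)`: the `K`-linear span of the
monomials `pq*` with `|p| − |q| = n`. -/
def lpaComp (n : ℤ) : Submodule K (LPA K G) := Submodule.span K (MonSet K G n)

/-- A homogeneous element of `L_K(E)`. -/
def LHomog (x : LPA K G) : Prop := ∃ n : ℤ, x ∈ lpaComp K G n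

/-- A graded simple faithful representation of `L_K(E)`: a `ℤ`-graded left module
which is graded simple (a submodule is graded iff it is generated by its
homogeneous elements) and has zero annihilator. -/
structure GradedSimpleFaithfulRep : Type 1 where
  M : Type
  [acg : AddCommGroup M]
  [mod : Module (LPA K G) M]
  gr : ℤ → AddSubgroup M
  internal : DirectSum.IsInternal gr
  compat : ∀ (i n : ℤ) (x : LPA K G) (m : M),
    x ∈ lpaComp K G i → m ∈ gr n → x • m ∈ gr (i + n)
  nontrivial : ∃ m : M, m ≠ 0
  gsimple : ∀ N : Submodule (LPA K G) M,
    N = Submodule.span (LPA K G) {m : M | m ∈ N ∧ ∃ n : ℤ, m ∈ gr n} →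
    N = ⊥ ∨ N = ⊤
  faithful : ∀ x : LPA K G, (∀ m : M, x • m = 0) → x = 0

attribute [instance] GradedSimpleFaithfulRep.acg GradedSimpleFaithfulRep.mod

/-- `L_K(E)` is graded (left) primitive: it has a graded simple left module with
zero annihilator. -/
def GradedPrimitive : Prop := Nonempty (GradedSimpleFaithfulRep K G)

/-! ### Auxiliary graph lemmas -/

@[simp] lemma isPathFrom_nil {G : DiGraph} (v : G.V) : G.IsPathFrom v [] := by
  simp [DiGraph.IsPathFrom]

@[simp] lemma isPathFrom_cons {G : DiGraph} (v : G.V) (e : G.E) (l : List G.E) :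
    G.IsPathFrom v (e :: l) ↔ G.s e = v ∧ G.IsPathFrom (G.r e) l := by
  simp [DiGraph.IsPathFrom]

@[simp] lemma pathEnd_nil {G : DiGraph} (v : G.V) : G.pathEnd v [] = v := by
  simp [DiGraph.pathEnd]

@[simp] lemma pathEnd_cons {G : DiGraph} (v : G.V) (e : G.E) (l : List G.E) :
    G.pathEnd v (e :: l) = G.pathEnd (G.r e) l := by
  simp [DiGraph.pathEnd]

lemma isPathFrom_append {G : DiGraph} {v : G.V} {l₁ l₂ : List G.E}
    (h₁ : G.IsPathFrom v l₁) (h₂ : G.IsPathFrom (G.pathEnd v l₁) l₂) :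
    G.IsPathFrom v (l₁ ++ l₂) := by
  induction l₁ generalizing v with
  | nil => simpa using h₂
  | cons e l ih =>
      rw [pathEnd_cons] at h₂
      rw [isPathFrom_cons] at h₁
      rw [List.cons_append, isPathFrom_cons]
      exact ⟨h₁.1, ih h₁.2 h₂⟩

lemma pathEnd_append {G : DiGraph} (v : G.V) (l₁ l₂ : List G.E) :
    G.pathEnd v (l₁ ++ l₂) = G.pathEnd (G.pathEnd v l₁) l₂ := by
  induction l₁ generalizing v with
  | nil => simp
  | cons e l ih => simpa using ih (G.r e)

lemma reach_pathEnd {G : DiGraph} {v : G.V} {l : List G.E} (h : G.IsPathFrom v l) :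
    G.Reach v (G.pathEnd v l) := by
  induction l generalizing v with
  | nil => rw [pathEnd_nil]; exact Relation.ReflTransGen.refl
  | cons e l ih =>
      rw [isPathFrom_cons] at h
      rw [pathEnd_cons]
      exact Relation.ReflTransGen.head ⟨e, h.1, rfl⟩ (ih h.2)

/-! ### Basic relations in the Leavitt path algebra -/

lemma mk_rel {x y : LFree K G} (h : LRel K G x y) :
    RingQuot.mkAlgHom K (LRel K G) x = RingQuot.mkAlgHom K (LRel K G) y :=
  RingQuot.mkAlgHom_rel K h

lemma mk_zero' : RingQuot.mkAlgHom K (LRel K G) 0 = 0 := map_zero _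

lemma lv_mul_lv (v w : G.V) :
    lv K G v * lv K G w = if v = w then lv K G v else 0 := by
  simp only [lv, ← map_mul]
  split
  · next h => subst h; exact mk_rel K G (LRel.v_idem v)
  · next h => rw [← mk_zero' K G]; exact mk_rel K G (LRel.vv h)

lemma lv_s_mul_le (e : G.E) : lv K G (G.s e) * le K G e = le K G e := by
  simp only [lv, le, ← map_mul]; exact mk_rel K G (LRel.se e)

lemma le_mul_lv_r (e : G.E) : le K G e * lv K G (G.r e) = le K G e := by
  simp only [lv, le, ← map_mul]; exact mk_rel K G (LRel.er e)

lemma lv_r_mul_lg (e : G.E) : lv K G (G.r e) * lg K G e = lg K G e := by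
  simp only [lv, lg, ← map_mul]; exact mk_rel K G (LRel.rg e)

lemma lg_mul_lv_s (e : G.E) : lg K G e * lv K G (G.s e) = lg K G e := by
  simp only [lv, lg, ← map_mul]; exact mk_rel K G (LRel.gs e)

lemma lg_mul_le (e f : G.E) :
    lg K G e * le K G f = if e = f then lv K G (G.r e) else 0 := by
  simp only [lv, le, lg, ← map_mul]
  split
  · next h => subst h; exact mk_rel K G (LRel.ck1e e)
  · next h => rw [← mk_zero' K G]; exact mk_rel K G (LRel.ck1 h)

lemma lv_mul_le' (x : G.V) (e : G.E) :
    lv K G x * le K G e = if x = G.s e then le K G e else 0 := by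
  split
  · next h => subst h; exact lv_s_mul_le K G e
  · next h =>
      conv_lhs => rw [← lv_s_mul_le K G e, ← mul_assoc, lv_mul_lv]
      rw [if_neg h, zero_mul]

lemma le_mul_lv' (e : G.E) (x : G.V) :
    le K G e * lv K G x = if x = G.r e then le K G e else 0 := by
  split
  · next h => subst h; exact le_mul_lv_r K G e
  · next h =>
      conv_lhs => rw [← le_mul_lv_r K G e, mul_assoc, lv_mul_lv]
      rw [if_neg (fun hh => h hh.symm), mul_zero]

lemma lv_mul_lg' (x : G.V) (e : G.E) :
    lv K G x * lg K G e = if x = G.r e then lg K G e else 0 := by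
  split
  · next h => subst h; exact lv_r_mul_lg K G e
  · next h =>
      conv_lhs => rw [← lv_r_mul_lg K G e, ← mul_assoc, lv_mul_lv]
      rw [if_neg h, zero_mul]

lemma lg_mul_lv' (e : G.E) (x : G.V) :
    lg K G e * lv K G x = if x = G.s e then lg K G e else 0 := by
  split
  · next h => subst h; exact lg_mul_lv_s K G e
  · next h =>
      conv_lhs => rw [← lg_mul_lv_s K G e, mul_assoc, lv_mul_lv]
      rw [if_neg (fun hh => h hh.symm), mul_zero]

/-! ### Products over paths -/

@[simp] lemma pProd_nil : pProd K G ([] : List G.E) = 1 := rfl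

@[simp] lemma pProd_cons (e : G.E) (p : List G.E) :
    pProd K G (e :: p) = le K G e * pProd K G p := by
  simp [pProd]

@[simp] lemma gProd_nil : gProd K G ([] : List G.E) = 1 := rfl

@[simp] lemma gProd_cons (e : G.E) (q : List G.E) :
    gProd K G (e :: q) = gProd K G q * lg K G e := by
  simp [gProd]

lemma gProd_append_singleton (q : List G.E) (e : G.E) :
    gProd K G (q ++ [e]) = lg K G e * gProd K G q := by
  simp [gProd]
/-! ### A representation of the Leavitt path algebra: vertices are nonzero -/

/-- Basis elements: finite paths ending at a non-regular vertex. -/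
abbrev Bf : Type :=
  {p : G.V × List G.E // G.IsPathFrom p.1 p.2 ∧ ¬ G.Regular (G.pathEnd p.1 p.2)}

/-- Basis elements: infinite paths. -/
abbrev Bi : Type := {f : ℕ → G.E // ∀ n, G.r (f n) = G.s (f (n + 1))}

/-- The basis of the representation space. -/
abbrev BB : Type := Bf G ⊕ Bi G

/-- The source vertex of a basis element. -/
def srcB : BB G → G.V := Sum.elim (fun p => p.val.1) (fun f => G.s (f.val 0))

@[simp] lemma srcB_inl (p : Bf G) : srcB G (Sum.inl p) = p.val.1 := rfl
@[simp] lemma srcB_inr (fi : Bi G) : srcB G (Sum.inr fi) = G.s (fi.val 0) := rfl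

/-- The representation space. -/
abbrev Wrep : Type := BB G →₀ K

def shiftBi (fi : Bi G) : Bi G := ⟨fun n => fi.val (n + 1), fun n => fi.prop (n + 1)⟩

def tailBf (w : G.V) (f : G.E) (l : List G.E)
    (h : G.IsPathFrom w (f :: l) ∧ ¬ G.Regular (G.pathEnd w (f :: l))) : Bf G :=
  ⟨(G.r f, l), ((isPathFrom_cons w f l).mp h.1).2, by
    have h2 := h.2; rwa [pathEnd_cons] at h2⟩

def econs (e : G.E) (b : BB G) (h : G.r e = srcB G b) : BB G :=
  match b, h with
  | Sum.inl ⟨(w, l), hb⟩, h =>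
      Sum.inl ⟨(G.s e, e :: l), by
        have h' : G.r e = w := h
        constructor
        · rw [isPathFrom_cons]
          exact ⟨rfl, by rw [h']; exact hb.1⟩
        · rw [pathEnd_cons, h']; exact hb.2⟩
  | Sum.inr fi, h =>
      Sum.inr ⟨fun n => Nat.casesOn n e (fun k => fi.val k), by
        intro n
        cases n with
        | zero => exact h
        | succ k => exact fi.prop k⟩

lemma econs_inl_val (e : G.E) (w : G.V) (l : List G.E) (hb)
    (h : G.r e = srcB G (Sum.inl ⟨(w, l), hb⟩ : BB G)) :
    econs G e (Sum.inl ⟨(w, l), hb⟩) h = Sum.inl ⟨(G.s e, e :: l), by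
      have h' : G.r e = w := h
      constructor
      · rw [isPathFrom_cons]
        exact ⟨rfl, by rw [h']; exact hb.1⟩
      · rw [pathEnd_cons, h']; exact hb.2⟩ := rfl

lemma econs_inr_val (e : G.E) (fi : Bi G) (h : G.r e = srcB G (Sum.inr fi : BB G)) :
    econs G e (Sum.inr fi) h = Sum.inr ⟨fun n => Nat.casesOn n e (fun k => fi.val k), by
      intro n
      cases n with
      | zero => exact h
      | succ k => exact fi.prop k⟩ := rfl

lemma econs_inl_val' (e : G.E) (p : Bf G) (h : G.r e = srcB G (Sum.inl p : BB G)) :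
    econs G e (Sum.inl p) h = Sum.inl ⟨(G.s e, e :: p.val.2), by
      dsimp only
      constructor
      · rw [isPathFrom_cons]
        refine ⟨rfl, ?_⟩
        rw [show G.r e = p.val.1 from h]
        exact p.prop.1
      · rw [pathEnd_cons, show G.r e = p.val.1 from h]
        exact p.prop.2⟩ := by
  obtain ⟨⟨w, l⟩, hb⟩ := p
  rfl

@[simp] lemma srcB_econs (e : G.E) (b : BB G) (h : G.r e = srcB G b) :
    srcB G (econs G e b h) = G.s e := by
  cases b with
  | inl p => obtain ⟨⟨w, l⟩, hb⟩ := p; rfl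
  | inr fi => rfl

noncomputable def phiV (v : G.V) (b : BB G) : Wrep K G :=
  if srcB G b = v then Finsupp.single b 1 else 0

noncomputable def phiE (e : G.E) (b : BB G) : Wrep K G :=
  if h : G.r e = srcB G b then Finsupp.single (econs G e b h) 1 else 0

noncomputable def phiG (e : G.E) (b : BB G) : Wrep K G :=
  match b with
  | Sum.inl ⟨(_, []), _⟩ => 0
  | Sum.inl ⟨(w, f :: l), hb⟩ =>
      if f = e then Finsupp.single (Sum.inl (tailBf G w f l hb)) 1 else 0
  | Sum.inr fi =>
      if fi.val 0 = e then Finsupp.single (Sum.inr (shiftBi G fi)) 1 else 0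

lemma phiV_apply (v : G.V) (b : BB G) :
    phiV K G v b = if srcB G b = v then Finsupp.single b 1 else 0 := rfl

lemma phiE_apply (e : G.E) (b : BB G) :
    phiE K G e b = if h : G.r e = srcB G b then Finsupp.single (econs G e b h) 1 else 0 := rfl

lemma phiG_nil (e : G.E) (w : G.V) (hb) :
    phiG K G e (Sum.inl ⟨(w, []), hb⟩) = 0 := rfl

lemma phiG_consb (e : G.E) (w : G.V) (f : G.E) (l : List G.E) (hb) :
    phiG K G e (Sum.inl ⟨(w, f :: l), hb⟩) =
      if f = e then Finsupp.single (Sum.inl (tailBf G w f l hb)) 1 else 0 := rfl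

lemma phiG_inf (e : G.E) (fi : Bi G) :
    phiG K G e (Sum.inr fi) =
      if fi.val 0 = e then Finsupp.single (Sum.inr (shiftBi G fi)) 1 else 0 := rfl

/-- The "first edge" of a basis element, if any. -/
def fstEdge : BB G → Option G.E
  | Sum.inl ⟨(_, []), _⟩ => none
  | Sum.inl ⟨(_, f :: _), _⟩ => some f
  | Sum.inr fi => some (fi.val 0)

lemma phiG_eq_zero_of_ne (e : G.E) (b : BB G) (h : fstEdge G b ≠ some e) :
    phiG K G e b = 0 := by
  cases b with
  | inl p =>
      obtain ⟨⟨w, l⟩, hb⟩ := p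
      cases l with
      | nil => exact phiG_nil K G e w hb
      | cons f l =>
          rw [phiG_consb, if_neg]
          intro hfe
          subst hfe
          exact h rfl
  | inr fi =>
      rw [phiG_inf, if_neg]
      intro hfe
      subst hfe
      exact h rfl

lemma fstEdge_econs (e : G.E) (b : BB G) (h : G.r e = srcB G b) :
    fstEdge G (econs G e b h) = some e := by
  cases b with
  | inl p => obtain ⟨⟨w, l⟩, hb⟩ := p; rfl
  | inr fi => rfl

lemma phiG_econs (e : G.E) (b : BB G) (h : G.r e = srcB G b) :
    phiG K G e (econs G e b h) = Finsupp.single b 1 := by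
  cases b with
  | inl p =>
      obtain ⟨⟨w, l⟩, hb⟩ := p
      rw [econs_inl_val, phiG_consb, if_pos rfl]
      refine congrArg (fun x => Finsupp.single x (1 : K)) (congrArg Sum.inl (Subtype.ext ?_))
      have h' : G.r e = w := h
      show (G.r e, l) = (w, l)
      rw [h']
  | inr fi =>
      rw [econs_inr_val, phiG_inf]
      split
      · refine congrArg (fun x => Finsupp.single x (1 : K)) (congrArg Sum.inr (Subtype.ext ?_))
        funext n
        cases n with
        | zero => rfl
        | succ k => rfl
      · next hcond => exact absurd rfl hcond

lemma phiG_cases (e : G.E) (b : BB G) :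
    phiG K G e b = 0 ∨
      (∃ b' : BB G, phiG K G e b = Finsupp.single b' 1 ∧ srcB G b' = G.r e ∧
        srcB G b = G.s e) := by
  cases b with
  | inl p =>
      obtain ⟨⟨w, l⟩, hb⟩ := p
      cases l with
      | nil => exact Or.inl (phiG_nil K G e w hb)
      | cons f l =>
          by_cases hfe : f = e
          · subst hfe
            refine Or.inr ⟨Sum.inl (tailBf G w f l hb), ?_, rfl, ?_⟩
            · rw [phiG_consb, if_pos rfl]
            · rw [srcB_inl]
              exact (((isPathFrom_cons w f l).mp hb.1).1).symm
          · exact Or.inl (by rw [phiG_consb, if_neg hfe])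
  | inr fi =>
      by_cases hfe : fi.val 0 = e
      · refine Or.inr ⟨Sum.inr (shiftBi G fi), ?_, ?_, ?_⟩
        · rw [phiG_inf, if_pos hfe]
        · rw [srcB_inr]
          show G.s (fi.val 1) = G.r e
          rw [← hfe]
          exact (fi.prop 0).symm
        · rw [srcB_inr, hfe]
      · exact Or.inl (by rw [phiG_inf, if_neg hfe])

/-- Extend a map on basis elements to a linear endomorphism. -/
noncomputable def Aof (φ : BB G → Wrep K G) : Module.End K (Wrep K G) :=
  Finsupp.lsum K (fun b => LinearMap.toSpanSingleton K (Wrep K G) (φ b))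

@[simp] lemma Aof_single (φ : BB G → Wrep K G) (b : BB G) :
    Aof K G φ (Finsupp.single b 1) = φ b := by
  rw [Aof, Finsupp.lsum_single, LinearMap.toSpanSingleton_apply, one_smul]

lemma endo_ext {f g : Module.End K (Wrep K G)}
    (h : ∀ b : BB G, f (Finsupp.single b 1) = g (Finsupp.single b 1)) : f = g := by
  apply Finsupp.lhom_ext
  intro a k
  have hk : (Finsupp.single a k : Wrep K G) = k • Finsupp.single a 1 := by
    rw [Finsupp.smul_single, smul_eq_mul, mul_one]
  rw [hk, map_smul, map_smul, h a]

noncomputable def genMap : LVGen G → Module.End K (Wrep K G) :=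
  Sum.elim (fun v => Aof K G (phiV K G v))
    (Sum.elim (fun e => Aof K G (phiE K G e)) (fun e => Aof K G (phiG K G e)))

noncomputable def Frep : LFree K G →ₐ[K] Module.End K (Wrep K G) :=
  FreeAlgebra.lift K (genMap K G)

@[simp] lemma Frep_fv (v : G.V) : Frep K G (fv K G v) = Aof K G (phiV K G v) := by
  simp [Frep, fv, genMap]

@[simp] lemma Frep_fe (e : G.E) : Frep K G (fe K G e) = Aof K G (phiE K G e) := by
  simp [Frep, fe, genMap]

@[simp] lemma Frep_fg (e : G.E) : Frep K G (fg K G e) = Aof K G (phiG K G e) := by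
  simp [Frep, fg, genMap]

theorem relHold : ∀ ⦃x y : LFree K G⦄, LRel K G x y → Frep K G x = Frep K G y := by
  intro x y h
  cases h with
  | @vv v w hvw =>
      rw [map_mul, map_zero, Frep_fv, Frep_fv]
      apply endo_ext
      intro b
      rw [Module.End.mul_apply, Aof_single, LinearMap.zero_apply, phiV_apply K G w b]
      by_cases h1 : srcB G b = w
      · rw [if_pos h1, Aof_single, phiV_apply,
          if_neg (by rw [h1]; exact fun hh => hvw hh.symm)]
      · rw [if_neg h1, map_zero]
  | v_idem v =>
      rw [map_mul, Frep_fv]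
      apply endo_ext
      intro b
      rw [Module.End.mul_apply, Aof_single, phiV_apply K G v b]
      by_cases h1 : srcB G b = v
      · rw [if_pos h1, Aof_single, phiV_apply, if_pos h1]
      · rw [if_neg h1, map_zero]
  | se e =>
      rw [map_mul, Frep_fv, Frep_fe]
      apply endo_ext
      intro b
      rw [Module.End.mul_apply, Aof_single, phiE_apply K G e b]
      by_cases h1 : G.r e = srcB G b
      · rw [dif_pos h1, Aof_single, phiV_apply, if_pos (srcB_econs G e b h1)]
      · rw [dif_neg h1, map_zero]
  | er e =>
      rw [map_mul, Frep_fv, Frep_fe]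
      apply endo_ext
      intro b
      rw [Module.End.mul_apply, Aof_single, phiV_apply K G (G.r e) b]
      by_cases h1 : srcB G b = G.r e
      · rw [if_pos h1]
      · rw [if_neg h1, map_zero, Aof_single, phiE_apply, dif_neg (fun hh => h1 hh.symm)]
  | rg e =>
      rw [map_mul, Frep_fv, Frep_fg]
      apply endo_ext
      intro b
      rw [Module.End.mul_apply, Aof_single]
      rcases phiG_cases K G e b with h1 | ⟨b', hb', hsrc, _⟩
      · rw [h1, map_zero]
      · rw [hb', Aof_single, phiV_apply, if_pos hsrc]
  | gs e =>
      rw [map_mul, Frep_fg, Frep_fv]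
      apply endo_ext
      intro b
      rw [Module.End.mul_apply, Aof_single, phiV_apply K G (G.s e) b]
      by_cases h1 : srcB G b = G.s e
      · rw [if_pos h1]
      · rw [if_neg h1, map_zero, Aof_single]
        rcases phiG_cases K G e b with h2 | ⟨b', _, _, hsrc⟩
        · rw [h2]
        · exact absurd hsrc h1
  | @ck1 e f hef =>
      rw [map_mul, map_zero, Frep_fg, Frep_fe]
      apply endo_ext
      intro b
      rw [Module.End.mul_apply, Aof_single, LinearMap.zero_apply, phiE_apply K G f b]
      by_cases h1 : G.r f = srcB G b
      · rw [dif_pos h1, Aof_single]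
        apply phiG_eq_zero_of_ne
        rw [fstEdge_econs]
        intro hh
        exact hef (Option.some_injective _ hh).symm
      · rw [dif_neg h1, map_zero]
  | ck1e e =>
      rw [map_mul, Frep_fg, Frep_fe, Frep_fv]
      apply endo_ext
      intro b
      rw [Module.End.mul_apply, Aof_single, phiE_apply K G e b]
      by_cases h1 : G.r e = srcB G b
      · rw [dif_pos h1, Aof_single, phiG_econs, Aof_single, phiV_apply, if_pos h1.symm]
      · rw [dif_neg h1, map_zero, Aof_single, phiV_apply, if_neg (fun hh => h1 hh.symm)]
  | @ck2 v hfin hne =>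
      rw [Frep_fv, map_sum]
      apply endo_ext
      intro b
      rw [LinearMap.sum_apply, Aof_single]
      have hterm : ∀ e ∈ hfin.toFinset,
          (Frep K G (fe K G e * fg K G e)) (Finsupp.single b 1) =
            Aof K G (phiE K G e) (phiG K G e b) := by
        intro e _
        rw [map_mul, Frep_fe, Frep_fg, Module.End.mul_apply, Aof_single]
      rw [Finset.sum_congr rfl hterm]
      cases b with
      | inl p =>
          obtain ⟨⟨w, l⟩, hb⟩ := p
          cases l with
          | nil =>
              have hwv : w ≠ v := by
                intro hwv
                apply hb.2
                show G.Regular (G.pathEnd w [])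
                rw [pathEnd_nil, hwv]
                exact ⟨hne, hfin⟩
              rw [phiV_apply, if_neg (by rw [srcB_inl]; exact hwv)]
              refine (Finset.sum_eq_zero ?_).symm
              intro e _
              rw [phiG_nil, map_zero]
          | cons f l =>
              have hsf : G.s f = w := ((isPathFrom_cons w f l).mp hb.1).1
              have hterm2 : ∀ e ∈ hfin.toFinset,
                  Aof K G (phiE K G e) (phiG K G e (Sum.inl ⟨(w, f :: l), hb⟩)) =
                    if e = f then Finsupp.single (Sum.inl ⟨(w, f :: l), hb⟩ : BB G) 1
                      else 0 := by
                intro e he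
                by_cases hfe : f = e
                · subst hfe
                  rw [phiG_consb, if_pos rfl, if_pos rfl, Aof_single, phiE_apply,
                    dif_pos (show G.r f = srcB G (Sum.inl (tailBf G w f l hb)) from rfl),
                    econs_inl_val']
                  refine congrArg (fun x => Finsupp.single x (1 : K))
                    (congrArg Sum.inl (Subtype.ext ?_))
                  show (G.s f, f :: l) = (w, f :: l)
                  rw [hsf]
                · rw [phiG_consb, if_neg hfe, map_zero, if_neg (fun hh => hfe hh.symm)]
              rw [Finset.sum_congr rfl hterm2, Finset.sum_ite_eq']
              rw [phiV_apply]
              have hmem : f ∈ hfin.toFinset ↔ G.s f = v := by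
                rw [Set.Finite.mem_toFinset, Set.mem_preimage, Set.mem_singleton_iff]
              by_cases hc : G.s f = v
              · rw [if_pos (show srcB G (Sum.inl ⟨(w, f :: l), hb⟩ : BB G) = v by
                  show w = v; rw [← hsf]; exact hc), if_pos (hmem.mpr hc)]
              · rw [if_neg (show ¬ srcB G (Sum.inl ⟨(w, f :: l), hb⟩ : BB G) = v by
                  show ¬ w = v; rw [← hsf]; exact hc), if_neg (fun hh => hc (hmem.mp hh))]
      | inr fi =>
          have hterm2 : ∀ e ∈ hfin.toFinset,
              Aof K G (phiE K G e) (phiG K G e (Sum.inr fi)) =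
                if e = fi.val 0 then Finsupp.single (Sum.inr fi : BB G) 1 else 0 := by
            intro e he
            by_cases hfe : fi.val 0 = e
            · subst hfe
              rw [phiG_inf, if_pos rfl, Aof_single, phiE_apply,
                dif_pos (show G.r (fi.val 0) = srcB G (Sum.inr (shiftBi G fi)) from fi.prop 0),
                econs_inr_val, if_pos rfl]
              refine congrArg (fun x => Finsupp.single x (1 : K))
                (congrArg Sum.inr (Subtype.ext ?_))
              funext n
              cases n with
              | zero => rfl
              | succ k => rfl
            · rw [phiG_inf, if_neg hfe, map_zero, if_neg (fun hh => hfe hh.symm)]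
          rw [Finset.sum_congr rfl hterm2, Finset.sum_ite_eq']
          rw [phiV_apply, srcB_inr]
          have hmem : fi.val 0 ∈ hfin.toFinset ↔ G.s (fi.val 0) = v := by
            rw [Set.Finite.mem_toFinset, Set.mem_preimage, Set.mem_singleton_iff]
          by_cases hc : G.s (fi.val 0) = v
          · rw [if_pos hc, if_pos (hmem.mpr hc)]
          · rw [if_neg hc, if_neg (fun hh => hc (hmem.mp hh))]

lemma exists_srcB (v : G.V) : ∃ b : BB G, srcB G b = v := by
  by_cases hs : ∃ l, G.IsPathFrom v l ∧ ¬ G.Regular (G.pathEnd v l)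
  · obtain ⟨l, h1, h2⟩ := hs
    exact ⟨Sum.inl ⟨(v, l), h1, h2⟩, rfl⟩
  · push_neg at hs
    have step : ∀ t : {p : G.V × List G.E // G.IsPathFrom v p.2 ∧ G.pathEnd v p.2 = p.1},
        ∃ (e : G.E) (t' : {p : G.V × List G.E // G.IsPathFrom v p.2 ∧ G.pathEnd v p.2 = p.1}),
          G.s e = t.val.1 ∧ t'.val.1 = G.r e := by
      rintro ⟨⟨w, l⟩, h1, h2⟩
      dsimp only at h1 h2 ⊢
      have hreg : G.Regular w := by rw [← h2]; exact hs l h1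
      obtain ⟨e, he⟩ := hreg.1
      have he' : G.s e = w := he
      refine ⟨e, ⟨(G.r e, l ++ [e]), ⟨isPathFrom_append h1 ?_, ?_⟩⟩, he', rfl⟩
      · rw [isPathFrom_cons]
        exact ⟨by rw [h2]; exact he', isPathFrom_nil _⟩
      · dsimp only
        rw [pathEnd_append, pathEnd_cons, pathEnd_nil]
    choose edge next hedge hnext using step
    let t0 : {p : G.V × List G.E // G.IsPathFrom v p.2 ∧ G.pathEnd v p.2 = p.1} :=
      ⟨(v, []), isPathFrom_nil _, pathEnd_nil _⟩
    let seq : ℕ → {p : G.V × List G.E // G.IsPathFrom v p.2 ∧ G.pathEnd v p.2 = p.1} :=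
      fun n => Nat.rec t0 (fun _ t => next t) n
    have hcomp : ∀ n, G.r (edge (seq n)) = G.s (edge (seq (n + 1))) := by
      intro n
      have h1 : seq (n + 1) = next (seq n) := rfl
      rw [hedge (seq (n + 1)), h1, hnext (seq n)]
    refine ⟨Sum.inr ⟨fun n => edge (seq n), hcomp⟩, ?_⟩
    rw [srcB_inr]
    exact hedge t0

/-- The lifted representation of the Leavitt path algebra. -/
noncomputable def PhiRep : LPA K G →ₐ[K] Module.End K (Wrep K G) :=
  RingQuot.liftAlgHom K ⟨Frep K G, relHold K G⟩

theorem lv_ne_zero (v : G.V) : lv K G v ≠ 0 := by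
  intro h0
  obtain ⟨b, hb⟩ := exists_srcB G v
  have h1 : PhiRep K G (lv K G v) = Aof K G (phiV K G v) := by
    rw [lv, PhiRep, RingQuot.liftAlgHom_mkAlgHom_apply, Frep_fv]
  rw [h0, map_zero] at h1
  have h2 := congrArg (fun (f : Module.End K (Wrep K G)) => f (Finsupp.single b 1)) h1
  simp only [LinearMap.zero_apply, Aof_single] at h2
  rw [phiV_apply, if_pos hb] at h2
  exact one_ne_zero (Finsupp.single_eq_zero.mp h2.symm)
/-! ### Monomial terms -/

/-- A monomial `u p q*` datum. -/
structure MonTerm (G : DiGraph) where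
  u : G.V
  w : G.V
  p : List G.E
  q : List G.E
  hp : G.IsPathFrom u p
  hq : G.IsPathFrom w q
  he : G.pathEnd u p = G.pathEnd w q

/-- The element of the Leavitt path algebra associated to a monomial term. -/
noncomputable def eltOf (t : MonTerm G) : LPA K G :=
  lv K G t.u * pProd K G t.p * gProd K G t.q

/-- The degree of a monomial term. -/
def degOfT (t : MonTerm G) : ℤ := (t.p.length : ℤ) - (t.q.length : ℤ)

lemma eltOf_mem (t : MonTerm G) : eltOf K G t ∈ lpaComp K G (degOfT G t) :=
  Submodule.subset_span ⟨t.u, t.w, t.p, t.q, t.hp, t.hq, t.he, rfl, rfl⟩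

lemma lv_mem_comp (w : G.V) : lv K G w ∈ lpaComp K G 0 :=
  Submodule.subset_span ⟨w, w, [], [], isPathFrom_nil _, isPathFrom_nil _, rfl, by simp,
    by rw [pProd_nil, gProd_nil, mul_one, mul_one]⟩

lemma le_mem_comp (e : G.E) : le K G e ∈ lpaComp K G 1 :=
  Submodule.subset_span ⟨G.s e, G.r e, [e], [], by rw [isPathFrom_cons]; exact ⟨rfl, isPathFrom_nil _⟩,
    isPathFrom_nil _, by rw [pathEnd_cons], by simp,
    by rw [pProd_cons, pProd_nil, gProd_nil, mul_one, mul_one, lv_s_mul_le]⟩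

lemma gProd_single (e : G.E) : gProd K G [e] = lg K G e := by
  rw [show [e] = [] ++ [e] from rfl, gProd_append_singleton, gProd_nil, mul_one]

lemma lg_mem_comp (e : G.E) : lg K G e ∈ lpaComp K G (-1) :=
  Submodule.subset_span ⟨G.r e, G.s e, [], [e], isPathFrom_nil _,
    by rw [isPathFrom_cons]; exact ⟨rfl, isPathFrom_nil _⟩,
    by rw [pathEnd_cons], by simp,
    by rw [pProd_nil, gProd_single, mul_one, lv_r_mul_lg]⟩

/-! ### Multiplication of generators with monomial terms -/

lemma lv_mul_eltOf (v : G.V) (t : MonTerm G) :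
    lv K G v * eltOf K G t = if v = t.u then eltOf K G t else 0 := by
  by_cases h : v = t.u
  · rw [if_pos h, h, eltOf, ← mul_assoc, ← mul_assoc, lv_mul_lv, if_pos rfl]
  · rw [if_neg h, eltOf, ← mul_assoc, ← mul_assoc, lv_mul_lv, if_neg h, zero_mul, zero_mul]

lemma le_mul_eltOf (e : G.E) (t : MonTerm G) :
    le K G e * eltOf K G t = 0 ∨
      ∃ t' : MonTerm G, le K G e * eltOf K G t = eltOf K G t' ∧
        t'.u = G.s e ∧ t'.w = t.w ∧ t'.q = t.q ∧ t'.p = e :: t.p := by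
  by_cases h : G.r e = t.u
  · right
    refine ⟨⟨G.s e, t.w, e :: t.p, t.q, ?_, t.hq, ?_⟩, ?_, rfl, rfl, rfl, rfl⟩
    · rw [isPathFrom_cons]
      exact ⟨rfl, by rw [h]; exact t.hp⟩
    · rw [pathEnd_cons, h]
      exact t.he
    · show le K G e * (lv K G t.u * pProd K G t.p * gProd K G t.q) =
        lv K G (G.s e) * pProd K G (e :: t.p) * gProd K G t.q
      rw [pProd_cons, ← mul_assoc, ← mul_assoc, ← mul_assoc, lv_s_mul_le,
        le_mul_lv', if_pos h.symm]
  · left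
    rw [eltOf, ← mul_assoc, ← mul_assoc, le_mul_lv', if_neg (fun hh => h hh.symm),
      zero_mul, zero_mul]

lemma lg_mul_eltOf (e : G.E) (t : MonTerm G) :
    lg K G e * eltOf K G t = 0 ∨
    (∃ t' : MonTerm G, lg K G e * eltOf K G t = eltOf K G t' ∧ t.p = e :: t'.p ∧
      t'.w = t.w ∧ t'.q = t.q ∧ t'.u = G.r e) ∨
    (∃ t' : MonTerm G, lg K G e * eltOf K G t = eltOf K G t' ∧ t.p = [] ∧ t'.p = [] ∧
      t'.w = t.w ∧ t'.q = t.q ++ [e] ∧ t'.u = G.r e) := by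
  obtain ⟨u, w, p, q, hp, hq, he⟩ := t
  cases p with
  | nil =>
      by_cases h : u = G.s e
      · right; right
        have heu : G.pathEnd w q = u := by rw [← he, pathEnd_nil]
        refine ⟨⟨G.r e, w, [], q ++ [e], isPathFrom_nil _,
          isPathFrom_append hq (by rw [isPathFrom_cons]; exact ⟨by rw [heu, h], isPathFrom_nil _⟩),
          ?_⟩, ?_, rfl, rfl, rfl, rfl, rfl⟩
        · rw [pathEnd_nil, pathEnd_append, pathEnd_cons, pathEnd_nil]
        · show lg K G e * (lv K G u * pProd K G [] * gProd K G q) =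
            lv K G (G.r e) * pProd K G [] * gProd K G (q ++ [e])
          rw [pProd_nil, mul_one, mul_one, gProd_append_singleton, ← mul_assoc, ← mul_assoc,
            lg_mul_lv', if_pos h, lv_r_mul_lg]
      · left
        show lg K G e * (lv K G u * pProd K G [] * gProd K G q) = 0
        rw [pProd_nil, mul_one, ← mul_assoc, lg_mul_lv', if_neg h, zero_mul]
  | cons f p' =>
      have hsf : G.s f = u := ((isPathFrom_cons u f p').mp hp).1
      by_cases hef : f = e
      · subst hef
        right; left
        refine ⟨⟨G.r f, w, p', q, ((isPathFrom_cons u f p').mp hp).2, hq, ?_⟩, ?_, rfl, rfl,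
          rfl, rfl⟩
        · rw [← he, pathEnd_cons]
        · show lg K G f * (lv K G u * pProd K G (f :: p') * gProd K G q) =
            lv K G (G.r f) * pProd K G p' * gProd K G q
          rw [pProd_cons, ← mul_assoc, ← mul_assoc, ← mul_assoc, lg_mul_lv',
            if_pos hsf.symm, lg_mul_le, if_pos rfl]
      · left
        show lg K G e * (lv K G u * pProd K G (f :: p') * gProd K G q) = 0
        by_cases h : u = G.s e
        · rw [pProd_cons, ← mul_assoc, ← mul_assoc, ← mul_assoc, lg_mul_lv', if_pos h,
            lg_mul_le, if_neg (fun hh => hef hh.symm), zero_mul, zero_mul]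
        · rw [← mul_assoc, ← mul_assoc, lg_mul_lv', if_neg h, zero_mul, zero_mul]

/-- `eltOf` for the vertex monomial. -/
noncomputable def vertT (v : G.V) : MonTerm G :=
  ⟨v, v, [], [], isPathFrom_nil _, isPathFrom_nil _, rfl⟩

lemma eltOf_vertT (v : G.V) : eltOf K G (vertT G v) = lv K G v := by
  show lv K G v * pProd K G [] * gProd K G [] = lv K G v
  rw [pProd_nil, gProd_nil, mul_one, mul_one]

noncomputable def edgeT (e : G.E) : MonTerm G :=
  ⟨G.s e, G.r e, [e], [], by rw [isPathFrom_cons]; exact ⟨rfl, isPathFrom_nil _⟩,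
    isPathFrom_nil _, by rw [pathEnd_cons]⟩

lemma eltOf_edgeT (e : G.E) : eltOf K G (edgeT G e) = le K G e := by
  show lv K G (G.s e) * pProd K G [e] * gProd K G [] = le K G e
  rw [pProd_cons, pProd_nil, gProd_nil, mul_one, mul_one, lv_s_mul_le]

noncomputable def ghostT (e : G.E) : MonTerm G :=
  ⟨G.r e, G.s e, [], [e], isPathFrom_nil _,
    by rw [isPathFrom_cons]; exact ⟨rfl, isPathFrom_nil _⟩,
    by rw [pathEnd_cons]⟩

lemma eltOf_ghostT (e : G.E) : eltOf K G (ghostT G e) = lg K G e := by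
  show lv K G (G.r e) * pProd K G [] * gProd K G [e] = lg K G e
  rw [pProd_nil, gProd_single, mul_one, lv_r_mul_lg]

/-! ### Absorption lemmas -/

lemma lvP_absorb : ∀ (p : List G.E) (u : G.V), G.IsPathFrom u p →
    (lv K G u * pProd K G p) * lv K G (G.pathEnd u p) = lv K G u * pProd K G p := by
  intro p
  induction p with
  | nil =>
      intro u _
      rw [pProd_nil, mul_one, pathEnd_nil, lv_mul_lv, if_pos rfl]
  | cons e p' ih =>
      intro u hu
      have h2 := ih (G.r e) ((isPathFrom_cons u e p').mp hu).2
      rw [pathEnd_cons, pProd_cons, ← mul_assoc, ← le_mul_lv_r K G e]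
      calc lv K G u * (le K G e * lv K G (G.r e)) * pProd K G p' *
            lv K G (G.pathEnd (G.r e) p')
          = lv K G u * le K G e * ((lv K G (G.r e) * pProd K G p') *
            lv K G (G.pathEnd (G.r e) p')) := by
            rw [← mul_assoc, ← mul_assoc, ← mul_assoc, mul_assoc _ _ (pProd K G p')]
        _ = lv K G u * le K G e * (lv K G (G.r e) * pProd K G p') := by rw [h2]
        _ = lv K G u * (le K G e * lv K G (G.r e)) * pProd K G p' := by
            rw [mul_assoc, ← mul_assoc (le K G e), ← mul_assoc]

lemma G_absorb : ∀ (q : List G.E) (w : G.V), G.IsPathFrom w q → q ≠ [] →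
    lv K G (G.pathEnd w q) * gProd K G q = gProd K G q := by
  intro q
  induction q with
  | nil => intro w _ hne; exact absurd rfl hne
  | cons e q' ih =>
      intro w hw _
      rw [pathEnd_cons, gProd_cons]
      cases q' with
      | nil =>
          simp only [pathEnd_nil, gProd_nil, one_mul]
          exact lv_r_mul_lg K G e
      | cons f q'' =>
          rw [← mul_assoc, ih (G.r e) ((isPathFrom_cons w e _).mp hw).2 (by simp)]

lemma elt_factor (t : MonTerm G) :
    eltOf K G t = (lv K G t.u * pProd K G t.p) *
      (lv K G (G.pathEnd t.w t.q) * gProd K G t.q) := by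
  obtain ⟨u, w, p, q, hp, hq, he⟩ := t
  cases q with
  | nil =>
      show lv K G u * pProd K G p * gProd K G [] =
        (lv K G u * pProd K G p) * (lv K G (G.pathEnd w []) * gProd K G [])
      simp only [gProd_nil, mul_one, pathEnd_nil]
      simp only [pathEnd_nil] at he
      rw [← he]
      exact (lvP_absorb K G p u hp).symm
  | cons e q' =>
      show lv K G u * pProd K G p * gProd K G (e :: q') =
        (lv K G u * pProd K G p) * (lv K G (G.pathEnd w (e :: q')) * gProd K G (e :: q'))
      rw [G_absorb K G (e :: q') w hq (by simp)]
/-! ### Generation by monomials acting on a homogeneous generator -/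

section Rep

variable (R : GradedSimpleFaithfulRep K G)

/-- The value of a coefficient–monomial pair acting on a fixed module element. -/
noncomputable def termVal (m' : R.M) (ct : K × MonTerm G) : R.M :=
  (algebraMap K (LPA K G) ct.1 * eltOf K G ct.2) • m'

lemma list_rep_sum (m' : R.M) (xs : List R.M)
    (h : ∀ x ∈ xs, ∃ L : List (K × MonTerm G), x = (L.map (termVal K G R m')).sum) :
    ∃ L : List (K × MonTerm G), xs.sum = (L.map (termVal K G R m')).sum := by
  induction xs with
  | nil => exact ⟨[], by simp⟩
  | cons x xs ih =>
      obtain ⟨L1, h1⟩ := h x (List.mem_cons_self)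
      obtain ⟨L2, h2⟩ := ih (fun y hy => h y (List.mem_cons_of_mem x hy))
      exact ⟨L1 ++ L2, by rw [List.sum_cons, h1, h2, List.map_append, List.sum_append]⟩

lemma smul_termVal (m' : R.M) (g : LPA K G) (ct : K × MonTerm G) :
    g • termVal K G R m' ct = (algebraMap K (LPA K G) ct.1 * (g * eltOf K G ct.2)) • m' := by
  rw [termVal, ← mul_smul, ← mul_assoc, ← Algebra.commutes ct.1 g, mul_assoc]

lemma gen_smul_term (m' : R.M) (g : LPA K G) (ct : K × MonTerm G)
    (hg : g * eltOf K G ct.2 = 0 ∨ ∃ t', g * eltOf K G ct.2 = eltOf K G t') :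
    ∃ L : List (K × MonTerm G),
      g • termVal K G R m' ct = (L.map (termVal K G R m')).sum := by
  rcases hg with h0 | ⟨t', ht'⟩
  · exact ⟨[], by rw [smul_termVal, h0, mul_zero, zero_smul]; simp⟩
  · refine ⟨[(ct.1, t')], ?_⟩
    rw [smul_termVal, ht']
    simp [termVal]

lemma gen_smul_rep (g : LPA K G)
    (hgen : ∀ t : MonTerm G, g * eltOf K G t = 0 ∨ ∃ t', g * eltOf K G t = eltOf K G t')
    (m' : R.M) (m : R.M)
    (hm : ∃ L : List (K × MonTerm G), m = (L.map (termVal K G R m')).sum) :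
    ∃ L : List (K × MonTerm G), g • m = (L.map (termVal K G R m')).sum := by
  obtain ⟨L, rfl⟩ := hm
  rw [List.smul_sum, List.map_map]
  apply list_rep_sum
  intro x hx
  obtain ⟨ct, hct, rfl⟩ := List.mem_map.mp hx
  exact gen_smul_term K G R m' g ct (hgen ct.2)

lemma hgen_lv (v : G.V) :
    ∀ t : MonTerm G, lv K G v * eltOf K G t = 0 ∨
      ∃ t', lv K G v * eltOf K G t = eltOf K G t' := by
  intro t
  by_cases h : v = t.u
  · exact Or.inr ⟨t, by rw [lv_mul_eltOf, if_pos h]⟩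
  · exact Or.inl (by rw [lv_mul_eltOf, if_neg h])

lemma hgen_le (e : G.E) :
    ∀ t : MonTerm G, le K G e * eltOf K G t = 0 ∨
      ∃ t', le K G e * eltOf K G t = eltOf K G t' := by
  intro t
  rcases le_mul_eltOf K G e t with h | ⟨t', h, _⟩
  · exact Or.inl h
  · exact Or.inr ⟨t', h⟩

lemma hgen_lg (e : G.E) :
    ∀ t : MonTerm G, lg K G e * eltOf K G t = 0 ∨
      ∃ t', lg K G e * eltOf K G t = eltOf K G t' := by
  intro t
  rcases lg_mul_eltOf K G e t with h | ⟨t', h, _⟩ | ⟨t', h, _⟩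
  · exact Or.inl h
  · exact Or.inr ⟨t', h⟩
  · exact Or.inr ⟨t', h⟩

lemma alg_smul_term (m' : R.M) (k : K) (ct : K × MonTerm G) :
    algebraMap K (LPA K G) k • termVal K G R m' ct = termVal K G R m' (k * ct.1, ct.2) := by
  rw [termVal, termVal, ← mul_smul, ← mul_assoc, ← map_mul]

lemma Npure_smul (m' : R.M) (x : LPA K G) :
    ∀ m : R.M, (∃ L : List (K × MonTerm G), m = (L.map (termVal K G R m')).sum) →
      ∃ L : List (K × MonTerm G), x • m = (L.map (termVal K G R m')).sum := by
  obtain ⟨y, rfl⟩ := RingQuot.mkAlgHom_surjective K (LRel K G) x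
  induction y using FreeAlgebra.induction with
  | grade0 k =>
      intro m hm
      obtain ⟨L, rfl⟩ := hm
      rw [AlgHom.commutes, List.smul_sum, List.map_map]
      refine ⟨L.map (fun ct => (k * ct.1, ct.2)), ?_⟩
      rw [List.map_map]
      exact congrArg List.sum
        (List.map_congr_left (fun ct _ => alg_smul_term K G R m' k ct))
  | grade1 gen =>
      rcases gen with v | e | e
      · exact fun m hm => gen_smul_rep K G R (lv K G v) (hgen_lv K G v) m' m hm
      · exact fun m hm => gen_smul_rep K G R (le K G e) (hgen_le K G e) m' m hm
      · exact fun m hm => gen_smul_rep K G R (lg K G e) (hgen_lg K G e) m' m hm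
  | mul a b iha ihb =>
      intro m hm
      rw [map_mul, mul_smul]
      exact iha _ (ihb m hm)
  | add a b iha ihb =>
      intro m hm
      obtain ⟨L1, h1⟩ := iha m hm
      obtain ⟨L2, h2⟩ := ihb m hm
      refine ⟨L1 ++ L2, ?_⟩
      rw [map_add, add_smul, h1, h2, List.map_append, List.sum_append]

theorem genPure (hV : Nonempty G.V) (m' : R.M) (j : ℤ) (hm' : m' ∈ R.gr j) (h0 : m' ≠ 0)
    (m : R.M) : ∃ L : List (K × MonTerm G), m = (L.map (termVal K G R m')).sum := by
  classical
  set S : Set R.M := Set.range (fun t : MonTerm G => eltOf K G t • m') with hS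
  have hgraded : Submodule.span (LPA K G) S =
      Submodule.span (LPA K G)
        {m : R.M | m ∈ Submodule.span (LPA K G) S ∧ ∃ n, m ∈ R.gr n} := by
    apply le_antisymm
    · apply Submodule.span_le.mpr
      rintro x ⟨t, rfl⟩
      refine Submodule.subset_span ⟨Submodule.subset_span ⟨t, rfl⟩, degOfT G t + j, ?_⟩
      exact R.compat _ _ _ _ (eltOf_mem K G t) hm'
    · apply Submodule.span_le.mpr
      exact fun x hx => hx.1
  rcases R.gsimple _ hgraded with hbot | htop
  · exfalso
    have hz : ∀ t : MonTerm G, eltOf K G t • m' = 0 := by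
      intro t
      have hmem : eltOf K G t • m' ∈ Submodule.span (LPA K G) S :=
        Submodule.subset_span ⟨t, rfl⟩
      rw [hbot] at hmem
      exact (Submodule.mem_bot _).mp hmem
    have hgr2 : Submodule.span (LPA K G) {m'} =
        Submodule.span (LPA K G)
          {m : R.M | m ∈ Submodule.span (LPA K G) {m'} ∧ ∃ n, m ∈ R.gr n} := by
      apply le_antisymm
      · apply Submodule.span_le.mpr
        rintro x rfl
        exact Submodule.subset_span ⟨Submodule.mem_span_singleton_self _, j, hm'⟩
      · apply Submodule.span_le.mpr
        exact fun x hx => hx.1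
    rcases R.gsimple _ hgr2 with hbot2 | htop2
    · apply h0
      have hmem := Submodule.mem_span_singleton_self (R := LPA K G) m'
      rw [hbot2] at hmem
      exact (Submodule.mem_bot _).mp hmem
    · have hsc : ∀ x : LPA K G, ∃ k : K,
          x • m' = algebraMap K (LPA K G) k • m' := by
        intro x
        obtain ⟨y, rfl⟩ := RingQuot.mkAlgHom_surjective K (LRel K G) x
        induction y using FreeAlgebra.induction with
        | grade0 k => exact ⟨k, by rw [AlgHom.commutes]⟩
        | grade1 gen =>
            rcases gen with v | e | e
            · refine ⟨0, ?_⟩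
              show lv K G v • m' = _
              rw [← eltOf_vertT K G v, hz, map_zero, zero_smul]
            · refine ⟨0, ?_⟩
              show le K G e • m' = _
              rw [← eltOf_edgeT K G e, hz, map_zero, zero_smul]
            · refine ⟨0, ?_⟩
              show lg K G e • m' = _
              rw [← eltOf_ghostT K G e, hz, map_zero, zero_smul]
        | mul a b iha ihb =>
            obtain ⟨k1, h1⟩ := iha
            obtain ⟨k2, h2⟩ := ihb
            refine ⟨k2 * k1, ?_⟩
            rw [map_mul, mul_smul, h2, ← mul_smul, ← Algebra.commutes, mul_smul, h1,
              ← mul_smul, ← map_mul]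
        | add a b iha ihb =>
            obtain ⟨k1, h1⟩ := iha
            obtain ⟨k2, h2⟩ := ihb
            refine ⟨k1 + k2, ?_⟩
            rw [map_add, add_smul, h1, h2, ← add_smul, ← map_add]
      obtain ⟨v⟩ := hV
      apply lv_ne_zero K G v
      apply R.faithful
      intro m
      have hmtop : m ∈ Submodule.span (LPA K G) {m'} := by
        rw [htop2]
        exact Submodule.mem_top
      obtain ⟨x, hx⟩ := Submodule.mem_span_singleton.mp hmtop
      obtain ⟨k, hk⟩ := hsc x
      rw [← hx, hk, ← mul_smul, ← Algebra.commutes, mul_smul, ← eltOf_vertT K G v,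
        hz (vertT G v), smul_zero]
  · have hle : Submodule.span (LPA K G) S ≤
        { carrier := {m : R.M | ∃ L : List (K × MonTerm G),
            m = (L.map (termVal K G R m')).sum}
          add_mem' := by
            rintro a b ⟨L1, rfl⟩ ⟨L2, rfl⟩
            exact ⟨L1 ++ L2, by rw [List.map_append, List.sum_append]⟩
          zero_mem' := ⟨[], by simp⟩
          smul_mem' := fun c {x} hx => Npure_smul K G R m' c x hx : Submodule (LPA K G) R.M} := by
      apply Submodule.span_le.mpr
      rintro x ⟨t, rfl⟩
      exact ⟨[(1, t)], by simp [termVal]⟩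
    apply hle
    rw [htop]
    exact Submodule.mem_top

end Rep
/-! ### Graded decomposition -/

set_option maxHeartbeats 1000000 in
set_option synthInstance.maxHeartbeats 200000 in
lemma grComp_eq_zero (R : GradedSimpleFaithfulRep K G) {s : Finset ℤ} (y : ℤ → R.M)
    (hy : ∀ d ∈ s, y d ∈ R.gr d) (h : ∑ d ∈ s, y d = 0) : ∀ d ∈ s, y d = 0 := by
  classical
  set x : DirectSum ℤ (fun n : ℤ => R.gr n) :=
    ∑ d ∈ s.attach, DirectSum.of (fun n : ℤ => R.gr n) d.1 ⟨y d.1, hy d.1 d.2⟩ with hx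
  have hmap : DirectSum.coeAddMonoidHom R.gr x = 0 := by
    rw [hx, map_sum]
    have hterm : ∀ d ∈ s.attach, DirectSum.coeAddMonoidHom R.gr
        (DirectSum.of (fun n : ℤ => R.gr n) d.1 ⟨y d.1, hy d.1 d.2⟩) = y d.1 :=
      fun d _ => DirectSum.coeAddMonoidHom_of _ _ _
    rw [Finset.sum_congr rfl hterm, Finset.sum_attach s y]
    exact h
  have hx0 : x = 0 := by
    apply R.internal.injective
    rw [hmap, map_zero]
  intro d hd
  have happ : x d = 0 := by rw [hx0]; rfl
  rw [hx, DFinsupp.finset_sum_apply] at happ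
  have hsingle := Finset.sum_eq_single_of_mem (⟨d, hd⟩ : {a // a ∈ s})
    (Finset.mem_attach s _)
    (f := fun d' : {a // a ∈ s} =>
      (DirectSum.of (fun n : ℤ => R.gr n) d'.1 ⟨y d'.1, hy d'.1 d'.2⟩) d)
    (by
      intro b _ hbne
      apply DirectSum.of_eq_of_ne
      exact fun hcontra => hbne (Subtype.ext hcontra.symm))
  rw [hsingle] at happ
  have happ2 : (DirectSum.of (fun n : ℤ => R.gr n) d ⟨y d, hy d hd⟩) d = 0 := happ
  rw [DirectSum.of_eq_same] at happ2
  exact congrArg Subtype.val happ2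

lemma list_fiber_sum {α M : Type} [AddCommMonoid M] (L : List α) (dg : α → ℤ) (f : α → M)
    (D : Finset ℤ) (hD : ∀ a ∈ L, dg a ∈ D) :
    ∑ d ∈ D, ((L.filter (fun a => dg a = d)).map f).sum = (L.map f).sum := by
  classical
  induction L with
  | nil => simp
  | cons a L ih =>
      have hD' : ∀ b ∈ L, dg b ∈ D := fun b hb => hD b (List.mem_cons_of_mem a hb)
      have hstep : ∀ d ∈ D, (((a :: L).filter (fun x => dg x = d)).map f).sum =
          (if dg a = d then f a else 0) + ((L.filter (fun x => dg x = d)).map f).sum := by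
        intro d _
        by_cases had : dg a = d
        · rw [List.filter_cons_of_pos (by simpa using had), List.map_cons, List.sum_cons,
            if_pos had]
        · rw [List.filter_cons_of_neg (by simpa using had), if_neg had, zero_add]
      rw [Finset.sum_congr rfl hstep, Finset.sum_add_distrib, List.map_cons, List.sum_cons,
        ih hD', Finset.sum_ite_eq D (dg a) (fun _ => f a),
        if_pos (hD a (List.mem_cons_self))]

theorem genGraded (R : GradedSimpleFaithfulRep K G) (hV : Nonempty G.V) (m' : R.M) (j : ℤ)
    (hm' : m' ∈ R.gr j) (h0 : m' ≠ 0) (m : R.M) (hm : m ∈ R.gr j) :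
    ∃ L : List (K × MonTerm G), (∀ ct ∈ L, ct.2.p.length = ct.2.q.length) ∧
      m = (L.map (termVal K G R m')).sum := by
  classical
  obtain ⟨L, hL⟩ := genPure K G R hV m' j hm' h0 m
  have htermmem : ∀ ct : K × MonTerm G, termVal K G R m' ct ∈ R.gr (degOfT G ct.2 + j) := by
    intro ct
    apply R.compat _ _ _ _ _ hm'
    rw [show algebraMap K (LPA K G) ct.1 * eltOf K G ct.2 = ct.1 • eltOf K G ct.2 from
      (Algebra.smul_def ct.1 _).symm]
    exact Submodule.smul_mem _ ct.1 (eltOf_mem K G ct.2)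
  have key := grComp_eq_zero K G R
    (s := insert j (L.map (fun ct => degOfT G ct.2 + j)).toFinset)
    (y := fun d => ((L.filter (fun ct => degOfT G ct.2 + j = d)).map
      (termVal K G R m')).sum + (if d = j then -m else 0))
    (by
      intro d _
      apply add_mem
      · apply list_sum_mem
        intro x hx
        obtain ⟨ct, hctmem, rfl⟩ := List.mem_map.mp hx
        have hfil : degOfT G ct.2 + j = d := by
          simpa using (List.mem_filter.mp hctmem).2
        rw [← hfil]
        exact htermmem ct
      · by_cases hdj : d = j
        · rw [if_pos hdj, hdj]
          exact neg_mem hm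
        · rw [if_neg hdj]
          exact zero_mem _)
    (by
      rw [Finset.sum_add_distrib,
        list_fiber_sum L (fun ct => degOfT G ct.2 + j) (termVal K G R m') _
          (fun ct hct => Finset.mem_insert_of_mem
            (List.mem_toFinset.mpr (List.mem_map_of_mem hct))),
        Finset.sum_ite_eq' _ j (fun _ => -m), if_pos (Finset.mem_insert_self j _), ← hL,
        add_neg_cancel])
    j (Finset.mem_insert_self j _)
  refine ⟨L.filter (fun ct => degOfT G ct.2 + j = j), ?_, ?_⟩
  · intro ct hct
    have hfil : degOfT G ct.2 + j = j := by
      simpa using (List.mem_filter.mp hct).2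
    have hdeg : degOfT G ct.2 = 0 := by omega
    rw [degOfT] at hdeg
    omega
  · have key2 : (List.map (termVal K G R m')
        (L.filter (fun ct => decide (degOfT G ct.2 + j = j)))).sum +
        (if j = j then -m else 0) = 0 := key
    rw [if_pos (show j = j from rfl)] at key2
    exact (add_neg_eq_zero.mp key2).symm
/-! ### Finiteness of vertex and ghost supports -/

lemma finVert (R : GradedSimpleFaithfulRep K G) (hV : Nonempty G.V) (j : ℤ) (m : R.M)
    (hm : m ∈ R.gr j) : {w : G.V | lv K G w • m ≠ 0}.Finite := by
  classical
  by_cases hS : {w : G.V | lv K G w • m ≠ 0}.Nonempty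
  · obtain ⟨w₀, hw₀⟩ := hS
    have hm1 : lv K G w₀ • m ∈ R.gr j := by
      have := R.compat 0 j _ m (lv_mem_comp K G w₀) hm
      rwa [zero_add] at this
    obtain ⟨L, hdeg, hL⟩ := genGraded K G R hV (lv K G w₀ • m) j hm1 hw₀ m hm
    apply Set.Finite.subset ((L.map (fun ct => ct.2.u)).toFinset : Finset G.V).finite_toSet
    intro w hw
    by_contra hnot
    apply hw
    rw [hL, List.smul_sum, List.map_map]
    apply List.sum_eq_zero
    intro x hx
    obtain ⟨ct, hct, rfl⟩ := List.mem_map.mp hx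
    show lv K G w • termVal K G R (lv K G w₀ • m) ct = 0
    rw [smul_termVal, lv_mul_eltOf, if_neg, mul_zero, zero_smul]
    intro hwu
    apply hnot
    exact Finset.mem_coe.mpr (List.mem_toFinset.mpr
      (by rw [hwu]; exact List.mem_map_of_mem hct))
  · rw [Set.not_nonempty_iff_eq_empty] at hS
    rw [hS]
    exact Set.finite_empty

lemma finGhost (R : GradedSimpleFaithfulRep K G) (hV : Nonempty G.V) (j : ℤ) (m : R.M)
    (hm : m ∈ R.gr j) : {e : G.E | lg K G e • m ≠ 0}.Finite := by
  classical
  by_cases hS : {e : G.E | lg K G e • m ≠ 0}.Nonempty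
  · obtain ⟨e₀, he₀⟩ := hS
    have hm1 : lg K G e₀ • m ∈ R.gr (-1 + j) := R.compat (-1) j _ m (lg_mem_comp K G e₀) hm
    set n₀ : R.M := le K G e₀ • (lg K G e₀ • m) with hn₀
    have hn₀mem : n₀ ∈ R.gr j := by
      have := R.compat 1 (-1 + j) _ _ (le_mem_comp K G e₀) hm1
      rwa [show (1 : ℤ) + (-1 + j) = j by ring] at this
    have hig : lg K G e₀ • n₀ = lg K G e₀ • m := by
      rw [hn₀, ← mul_smul, lg_mul_le, if_pos rfl, ← mul_smul, lv_r_mul_lg]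
    have hn₀ne : n₀ ≠ 0 := by
      intro h0
      apply he₀
      rw [← hig, h0, smul_zero]
    obtain ⟨L, hdeg, hL⟩ := genGraded K G R hV n₀ j hn₀mem hn₀ne m hm
    apply Set.Finite.subset (Set.Finite.union (Set.finite_singleton e₀)
      (((L.filterMap (fun ct => ct.2.p.head?)).toFinset : Finset G.E).finite_toSet))
    intro e he
    by_contra hnot
    rw [Set.mem_union, Set.mem_singleton_iff] at hnot
    push_neg at hnot
    obtain ⟨hne₀, hnhead⟩ := hnot
    apply he
    rw [hL, List.smul_sum, List.map_map]
    apply List.sum_eq_zero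
    intro x hx
    obtain ⟨ct, hct, rfl⟩ := List.mem_map.mp hx
    show lg K G e • termVal K G R n₀ ct = 0
    rw [smul_termVal]
    rcases lg_mul_eltOf K G e ct.2 with h0 | ⟨t', heq, hhead, _, _, _⟩ |
      ⟨t', heq, hpnil, hp', hw', hq', hu'⟩
    · rw [h0, mul_zero, zero_smul]
    · exfalso
      apply hnhead
      exact Finset.mem_coe.mpr (List.mem_toFinset.mpr
        (List.mem_filterMap.mpr ⟨ct, hct, by rw [hhead]; rfl⟩))
    · have hq0 : ct.2.q = [] := by
        have hlen := hdeg ct hct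
        rw [hpnil] at hlen
        exact List.length_eq_zero_iff.mp hlen.symm
      have ht'q : t'.q = [e] := by rw [hq', hq0]; rfl
      have helt : eltOf K G t' = lg K G e := by
        rw [eltOf, hu', hp', ht'q, pProd_nil, mul_one, gProd_single, lv_r_mul_lg]
      rw [heq, helt, mul_smul, hn₀, ← mul_smul (lg K G e) (le K G e₀), lg_mul_le, if_neg hne₀, zero_smul, smul_zero]
  · rw [Set.not_nonempty_iff_eq_empty] at hS
    rw [hS]
    exact Set.finite_empty

/-! ### The branching sets -/

/-- Pairs `(w, q)` of a vertex and a path of length `d` from it whose associated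
action on `m` is nonzero. -/
def SdSet (R : GradedSimpleFaithfulRep K G) (d : ℕ) (m : R.M) : Set (G.V × List G.E) :=
  {x | x.2.length = d ∧ G.IsPathFrom x.1 x.2 ∧
    lv K G (G.pathEnd x.1 x.2) • (gProd K G x.2 • m) ≠ 0}

lemma Sd_finite (R : GradedSimpleFaithfulRep K G) (hV : Nonempty G.V) :
    ∀ (d : ℕ) (m : R.M), (∃ j, m ∈ R.gr j) → (SdSet K G R d m).Finite := by
  intro d
  induction d with
  | zero =>
      rintro m ⟨j, hm⟩
      apply Set.Finite.subset ((finVert K G R hV j m hm).image (fun w => (w, ([] : List G.E))))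
      rintro ⟨w, l⟩ ⟨hlen, hpath, hne⟩
      have hl : l = [] := List.length_eq_zero_iff.mp hlen
      subst hl
      refine ⟨w, ?_, rfl⟩
      show lv K G w • m ≠ 0
      rw [pathEnd_nil, gProd_nil, one_smul] at hne
      exact hne
  | succ d ih =>
      rintro m ⟨j, hm⟩
      have hfin := finGhost K G R hV j m hm
      apply Set.Finite.subset (hfin.biUnion (fun e _ =>
        ((ih (lg K G e • m) ⟨-1 + j, R.compat (-1) j _ m (lg_mem_comp K G e) hm⟩).image
          (fun x => (G.s e, e :: x.2)))))
      rintro ⟨w, l⟩ ⟨hlen, hpath, hne⟩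
      cases l with
      | nil => simp at hlen
      | cons e l' =>
          have h1 := (isPathFrom_cons w e l').mp hpath
          have hact : gProd K G (e :: l') • m = gProd K G l' • (lg K G e • m) := by
            rw [gProd_cons, mul_smul]
          rw [pathEnd_cons, hact] at hne
          have hlg : lg K G e • m ≠ 0 := by
            intro h0
            apply hne
            rw [h0, smul_zero, smul_zero]
          refine Set.mem_biUnion hlg ⟨(G.r e, l'), ⟨?_, h1.2, hne⟩, ?_⟩
          · simpa using hlen
          · show (G.s e, e :: l') = (w, e :: l')
            rw [h1.1]

set_option maxHeartbeats 1000000 in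
set_option synthInstance.maxHeartbeats 400000 in
/-- If the Leavitt path algebra `L_K(E)` is graded left primitive, then the vertex
set `E⁰` has the Countable Separation Property. -/
theorem csp_of_gradedPrimitive (h : GradedPrimitive K G) :
    G.CSP (Set.univ : Set G.V) := by
  classical
  by_cases hV : Nonempty G.V
  swap
  · exact ⟨∅, Set.countable_empty, fun v _ => absurd ⟨v⟩ hV⟩
  obtain ⟨R⟩ := h
  obtain ⟨mm, hmm⟩ := R.nontrivial
  obtain ⟨x, hx⟩ := R.internal.surjective mm
  have hxne : x ≠ 0 := by
    intro h0
    apply hmm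
    rw [← hx, h0, map_zero]
  obtain ⟨n, hn⟩ : ∃ n, x n ≠ 0 := by
    by_contra hc
    push_neg at hc
    exact hxne (DFinsupp.ext fun i => by simpa using hc i)
  set m₀ : R.M := (x n : R.M) with hm₀def
  have hm₀ : m₀ ∈ R.gr n := (x n).2
  have hm₀ne : m₀ ≠ 0 := fun h0 => hn (Subtype.ext h0)
  refine ⟨⋃ d : ℕ, (fun y : G.V × List G.E => G.pathEnd y.1 y.2) '' (SdSet K G R d m₀),
    ?_, ?_⟩
  · exact Set.countable_iUnion (fun d =>
      ((Sd_finite K G R hV d m₀ ⟨n, hm₀⟩).image _).countable)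
  · rintro v -
    have hvm : ∃ m : R.M, lv K G v • m ≠ 0 := by
      by_contra hno
      push_neg at hno
      exact lv_ne_zero K G v (R.faithful _ hno)
    obtain ⟨m, hm⟩ := hvm
    obtain ⟨L, hL⟩ := genPure K G R hV m₀ n hm₀ hm₀ne m
    rw [hL, List.smul_sum, List.map_map] at hm
    have hex : ∃ ct ∈ L, lv K G v • termVal K G R m₀ ct ≠ 0 := by
      by_contra hc
      push_neg at hc
      apply hm
      apply List.sum_eq_zero
      intro y hy
      obtain ⟨ct, hct, rfl⟩ := List.mem_map.mp hy
      exact hc ct hct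
    obtain ⟨ct, hct, hterm⟩ := hex
    rw [smul_termVal, lv_mul_eltOf] at hterm
    by_cases hvu : v = ct.2.u
    swap
    · rw [if_neg hvu, mul_zero, zero_smul] at hterm
      exact absurd rfl hterm
    rw [if_pos hvu] at hterm
    have helt : eltOf K G ct.2 • m₀ ≠ 0 := by
      intro h0
      apply hterm
      rw [mul_smul, h0, smul_zero]
    have hinner : lv K G (G.pathEnd ct.2.w ct.2.q) • (gProd K G ct.2.q • m₀) ≠ 0 := by
      intro h0
      apply helt
      rw [elt_factor, mul_smul, mul_smul, mul_smul, h0, smul_zero, smul_zero]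
    refine ⟨G.pathEnd ct.2.w ct.2.q, ?_, ?_⟩
    · exact Set.mem_iUnion.mpr ⟨ct.2.q.length, ⟨(ct.2.w, ct.2.q), ⟨rfl, ct.2.hq, hinner⟩, rfl⟩⟩
    · rw [← ct.2.he, hvu]
      exact reach_pathEnd ct.2.hp

end
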